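/- Let k, r ≥ 1 be integers and let X = (X_{j,l}) be uniformly distributed on Δ_k̄, with Y_j = Σ_{l=1}^r X_{j,l}. Then for all 1 ≤ j, l ≤ k with j ≠ l one has E[Y_j · Y_l] = r/(j · l · k · (kr+1)); in particular E[Y_j · Y_l] ≤ E[Y_j] · E[Y_l], i.e. Y_j and Y_l are negatively correlated. -/

import Mathlib

open MeasureTheory

/-- The uniform probability measure on a set `s` of Hausdorff dimension `d`: the
`d`-dimensional Hausdorff measure restricted to `s`, normalized to total mass `1`. -/
noncomputable def uniformOn {E : Type*} [EMetricSpace E] [MeasurableSpace E] [BorelSpace E]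
    (d : ℝ) (s : Set E) : Measure E :=
  (μH[d] s)⁻¹ • (μH[d] : Measure E).restrict s

open scoped ENNReal NNReal
open Module Set intervalIntegral


lemma beta_nat (c : ℝ) : ∀ (m a : ℕ),
    ∫ t in (0:ℝ)..c, t ^ a * (c - t) ^ m
      = c ^ (a + m + 1) * (a.factorial * m.factorial) / (a + m + 1).factorial := by
  intro m
  induction m with
  | zero =>
    intro a
    simp only [pow_zero, mul_one, integral_pow, Nat.factorial_zero, Nat.add_zero,
      Nat.factorial_succ, Nat.cast_one]
    rw [zero_pow (by positivity)]
    have h1 : (a.factorial : ℝ) ≠ 0 := Nat.cast_ne_zero.mpr a.factorial_ne_zero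
    have h2 : ((a:ℝ) + 1) ≠ 0 := by positivity
    push_cast
    field_simp
    ring
  | succ m ih =>
    intro a
    have hu : ∀ t ∈ Set.uIcc (0:ℝ) c, HasDerivAt (fun t : ℝ => t ^ (a+1))
        (((a:ℝ)+1) * t ^ a) t := by
      intro t _
      simpa using hasDerivAt_pow (a+1) t
    have hv : ∀ t ∈ Set.uIcc (0:ℝ) c, HasDerivAt (fun t : ℝ => (c - t) ^ (m+1))
        (-(((m:ℝ)+1) * (c - t) ^ m)) t := by
      intro t _
      have h1 : HasDerivAt (fun t : ℝ => c - t) (-1) t := by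
        simpa using (hasDerivAt_id t).const_sub c
      have := (hasDerivAt_pow (m+1) (c - t)).comp t h1
      refine this.congr_deriv ?_
      rw [Nat.add_sub_cancel]; push_cast; ring
    have key := integral_deriv_mul_eq_sub (u := fun t : ℝ => t ^ (a+1))
        (v := fun t : ℝ => (c - t) ^ (m+1))
        (u' := fun t : ℝ => ((a:ℝ)+1) * t ^ a)
        (v' := fun t : ℝ => -(((m:ℝ)+1) * (c - t) ^ m)) hu hv
        (Continuous.intervalIntegrable (by continuity) _ _)
        (Continuous.intervalIntegrable (by continuity) _ _)
    have e1 : (∫ t in (0:ℝ)..c, ((a:ℝ)+1) * t ^ a * (c - t) ^ (m+1))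
        = ((a:ℝ)+1) * ∫ t in (0:ℝ)..c, t ^ a * (c - t) ^ (m+1) := by
      rw [← intervalIntegral.integral_const_mul]
      congr 1; ext t; ring
    have e2 : (∫ t in (0:ℝ)..c, t ^ (a+1) * -(((m:ℝ)+1) * (c - t) ^ m))
        = -(((m:ℝ)+1) * ∫ t in (0:ℝ)..c, t ^ (a+1) * (c - t) ^ m) := by
      rw [← intervalIntegral.integral_const_mul, ← intervalIntegral.integral_neg]
      congr 1; ext t; ring
    rw [integral_add (Continuous.intervalIntegrable (by continuity) _ _)
      (Continuous.intervalIntegrable (by continuity) _ _)] at key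
    rw [e1, e2] at key
    have hbd : ((a:ℝ)+1) * (∫ t in (0:ℝ)..c, t ^ a * (c - t) ^ (m+1))
        - (((m:ℝ)+1) * ∫ t in (0:ℝ)..c, t ^ (a+1) * (c - t) ^ m) = 0 := by
      rw [show ((a:ℝ)+1) * (∫ t in (0:ℝ)..c, t ^ a * (c - t) ^ (m+1))
        - (((m:ℝ)+1) * ∫ t in (0:ℝ)..c, t ^ (a+1) * (c - t) ^ m)
        = ((a:ℝ)+1) * (∫ t in (0:ℝ)..c, t ^ a * (c - t) ^ (m+1))
        + -(((m:ℝ)+1) * ∫ t in (0:ℝ)..c, t ^ (a+1) * (c - t) ^ m) by ring, key]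
      simp [zero_pow (Nat.succ_ne_zero a), zero_pow (Nat.succ_ne_zero m)]
    have h2 : ((a:ℝ)+1) * (∫ t in (0:ℝ)..c, t ^ a * (c - t) ^ (m+1))
        = ((m:ℝ)+1) * (c ^ (a + m + 2) * ((a+1).factorial * m.factorial) / (a + m + 2).factorial) := by
      rw [show ((a:ℝ)+1) * (∫ t in (0:ℝ)..c, t ^ a * (c - t) ^ (m+1))
        = ((m:ℝ)+1) * ∫ t in (0:ℝ)..c, t ^ (a+1) * (c - t) ^ m by linarith]
      rw [ih (a+1)]
      norm_num [show a + 1 + m + 1 = a + m + 2 by ring]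
    have ha1 : ((a:ℝ)+1) ≠ 0 := by positivity
    have goal2 : (∫ t in (0:ℝ)..c, t ^ a * (c - t) ^ (m+1))
        = ((m:ℝ)+1) * (c ^ (a + m + 2) * ((a+1).factorial * m.factorial) / (a + m + 2).factorial) / ((a:ℝ)+1) := by
      field_simp at h2 ⊢
      linarith
    rw [goal2]
    rw [show a + (m+1) + 1 = a + m + 2 by ring]
    have e3 : ((a+1).factorial : ℝ) = ((a:ℝ)+1) * a.factorial := by
      rw [Nat.factorial_succ]; push_cast; ring
    have e4 : ((m+1).factorial : ℝ) = ((m:ℝ)+1) * m.factorial := by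
      rw [Nat.factorial_succ]; push_cast; ring
    rw [e3, e4]
    have h3 : ((a+m+2).factorial : ℝ) ≠ 0 := Nat.cast_ne_zero.mpr (Nat.factorial_ne_zero _)
    field_simp

def simplexB (n : ℕ) (c : ℝ) : Set (Fin n → ℝ) := {y | (∀ i, 0 ≤ y i) ∧ ∑ i, y i ≤ c}

lemma isClosed_simplexB (n : ℕ) (c : ℝ) : IsClosed (simplexB n c) := by
  have h1 : IsClosed {y : Fin n → ℝ | ∀ i, 0 ≤ y i} := by
    have : {y : Fin n → ℝ | ∀ i, 0 ≤ y i} = ⋂ i, {y | 0 ≤ y i} := by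
      ext y; simp [Set.mem_iInter]
    rw [this]
    exact isClosed_iInter fun i => isClosed_le continuous_const (continuous_apply i)
  have h2 : IsClosed {y : Fin n → ℝ | ∑ i, y i ≤ c} :=
    isClosed_le (by continuity) continuous_const
  exact h1.inter h2

lemma measurableSet_simplexB (n : ℕ) (c : ℝ) : MeasurableSet (simplexB n c) :=
  (isClosed_simplexB n c).measurableSet

lemma isCompact_simplexB (n : ℕ) (c : ℝ) : IsCompact (simplexB n c) := by
  have hb : Bornology.IsBounded (simplexB n c) := by
    apply (Metric.isBounded_closedBall (x := (0 : Fin n → ℝ)) (r := |c|)).subset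
    intro y hy
    rw [Metric.mem_closedBall, dist_zero_right]
    refine pi_norm_le_iff_of_nonneg (abs_nonneg c) |>.mpr fun i => ?_
    rw [Real.norm_eq_abs, abs_le]
    constructor
    · linarith [hy.1 i, abs_nonneg c]
    · calc y i ≤ ∑ i', y i' := Finset.single_le_sum (fun i' _ => hy.1 i') (Finset.mem_univ i)
        _ ≤ c := hy.2
        _ ≤ |c| := le_abs_self c
  exact Metric.isCompact_of_isClosed_isBounded (isClosed_simplexB n c) hb

lemma integrableOn_simplexB {n : ℕ} {c : ℝ} {f : (Fin n → ℝ) → ℝ} (hf : Continuous f) :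
    IntegrableOn f (simplexB n c) :=
  hf.continuousOn.integrableOn_compact (isCompact_simplexB n c)

lemma moment (n : ℕ) : ∀ (a : Fin n → ℕ) (c : ℝ), 0 ≤ c →
    ∫ y in simplexB n c, ∏ i, (y i) ^ (a i)
      = c ^ (n + ∑ i, a i) * (∏ i, ((a i).factorial : ℝ)) / ((n + ∑ i, a i).factorial) := by
  induction n with
  | zero =>
    intro a c hc
    have hset : simplexB 0 c = Set.univ := by
      ext y
      simp [simplexB, hc]
    rw [hset]
    simp [volume_pi, MeasureTheory.integral_const, Measure.real]
  | succ n ih =>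
    intro a c hc
    set f : (Fin (n+1) → ℝ) → ℝ := fun y => ∏ i, (y i) ^ (a i) with hf
    set F : (Fin (n+1) → ℝ) → ℝ := (simplexB (n+1) c).indicator f with hF
    have hfc : Continuous f := by
      apply continuous_finset_prod
      intro i _
      exact (continuous_apply i).pow _
    have hFint : Integrable F := by
      rw [hF, integrable_indicator_iff (measurableSet_simplexB _ _)]
      exact integrableOn_simplexB hfc
    have step1 : ∫ y in simplexB (n+1) c, f y = ∫ y, F y := by
      rw [hF, MeasureTheory.integral_indicator (measurableSet_simplexB _ _)]
    set mp := (measurePreserving_piFinSuccAbove (fun _ : Fin (n+1) => (volume : Measure ℝ)) 0).symm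
    have hsymm : ∀ z : ℝ × (Fin n → ℝ),
        (MeasurableEquiv.piFinSuccAbove (fun _ : Fin (n+1) => ℝ) 0).symm z = Fin.cons z.1 z.2 := by
      intro z
      simp [MeasurableEquiv.piFinSuccAbove_symm_apply, Fin.insertNthEquiv, Fin.insertNth_zero]
    have step2 : ∫ y, F y = ∫ z : ℝ × (Fin n → ℝ), F (Fin.cons z.1 z.2) := by
      rw [volume_pi, ← mp.integral_comp']
      congr 1
      ext z
      exact congrArg F (hsymm z)
    have hFint' : Integrable (fun z : ℝ × (Fin n → ℝ) => F (Fin.cons z.1 z.2))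
        ((volume : Measure ℝ).prod (volume : Measure (Fin n → ℝ))) := by
      have := mp.integrable_comp_emb (MeasurableEquiv.measurableEmbedding _) (g := F)
      rw [volume_pi] at hFint
      rw [← this] at hFint
      apply hFint.congr
      apply Filter.Eventually.of_forall
      intro z
      simp only [Function.comp_apply]
      exact congrArg F (hsymm z)
    have step3 : ∫ z : ℝ × (Fin n → ℝ), F (Fin.cons z.1 z.2)
        = ∫ t : ℝ, ∫ y : Fin n → ℝ, F (Fin.cons t y) := by
      rw [Measure.volume_eq_prod, integral_prod _ hFint']
    -- inner integral
    have hmem : ∀ t : ℝ, 0 ≤ t → ∀ y : Fin n → ℝ,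
        (Fin.cons t y ∈ simplexB (n+1) c ↔ y ∈ simplexB n (c - t)) := by
      intro t ht y
      constructor
      · rintro ⟨h1, h2⟩
        refine ⟨fun i => by simpa using h1 i.succ, ?_⟩
        rw [Fin.sum_univ_succ] at h2
        simp only [Fin.cons_zero, Fin.cons_succ] at h2
        linarith
      · rintro ⟨h1, h2⟩
        refine ⟨fun i => ?_, ?_⟩
        · rcases Fin.eq_zero_or_eq_succ i with rfl | ⟨i', rfl⟩
          · simpa using ht
          · simpa using h1 i'
        · rw [Fin.sum_univ_succ]
          simp only [Fin.cons_zero, Fin.cons_succ]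
          linarith
    set s' : ℕ := ∑ i : Fin n, a i.succ with hs'
    set K : ℝ := (∏ i : Fin n, ((a i.succ).factorial : ℝ)) / ((n + s').factorial) with hK
    have step4 : ∀ t : ℝ, (∫ y : Fin n → ℝ, F (Fin.cons t y))
        = (Set.Icc (0:ℝ) c).indicator (fun t => t ^ (a 0) * ((c - t) ^ (n + s') * K)) t := by
      intro t
      by_cases ht : t ∈ Set.Icc (0:ℝ) c
      · rw [Set.indicator_of_mem ht]
        have hptwise : ∀ y : Fin n → ℝ, F (Fin.cons t y)
            = t ^ (a 0) * (simplexB n (c - t)).indicator (fun y => ∏ i : Fin n, (y i) ^ (a i.succ)) y := by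
          intro y
          rw [hF]
          by_cases hy : y ∈ simplexB n (c - t)
          · rw [Set.indicator_of_mem ((hmem t ht.1 y).mpr hy), Set.indicator_of_mem hy, hf]
            simp [Fin.prod_univ_succ]
          · rw [Set.indicator_of_notMem (fun hmm => hy ((hmem t ht.1 y).mp hmm)),
              Set.indicator_of_notMem hy, mul_zero]
        rw [show (fun y : Fin n → ℝ => F (Fin.cons t y)) = fun y =>
          t ^ (a 0) * (simplexB n (c - t)).indicator (fun y => ∏ i : Fin n, (y i) ^ (a i.succ)) y
          from funext hptwise] at *
        rw [MeasureTheory.integral_const_mul, MeasureTheory.integral_indicator (measurableSet_simplexB _ _),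
          ih (fun i => a i.succ) (c - t) (by linarith [ht.2])]
        rw [hK, hs']
        ring
      · rw [Set.indicator_of_notMem ht]
        have hz : ∀ y : Fin n → ℝ, F (Fin.cons t y) = 0 := by
          intro y
          rw [hF]
          apply Set.indicator_of_notMem
          intro hmm
          rcases hmm with ⟨h1, h2⟩
          simp only [Set.mem_Icc, not_and_or, not_le] at ht
          rcases ht with ht | ht
          · have := h1 0
            simp only [Fin.cons_zero] at this
            linarith
          · rw [Fin.sum_univ_succ] at h2
            simp only [Fin.cons_zero, Fin.cons_succ] at h2
            have : (0:ℝ) ≤ ∑ i : Fin n, y i :=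
              Finset.sum_nonneg fun i _ => by simpa using h1 i.succ
            linarith
        simp only [hz, integral_zero]
    have step5 : (∫ t : ℝ, ∫ y : Fin n → ℝ, F (Fin.cons t y))
        = ∫ t in (0:ℝ)..c, t ^ (a 0) * ((c - t) ^ (n + s') * K) := by
      simp_rw [step4]
      rw [MeasureTheory.integral_indicator measurableSet_Icc,
        MeasureTheory.integral_Icc_eq_integral_Ioc,
        ← intervalIntegral.integral_of_le hc]
    have step6 : (∫ t in (0:ℝ)..c, t ^ (a 0) * ((c - t) ^ (n + s') * K))
        = (∫ t in (0:ℝ)..c, t ^ (a 0) * (c - t) ^ (n + s')) * K := by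
      rw [← intervalIntegral.integral_mul_const]
      congr 1; ext t; ring
    rw [step1, step2, step3, step5, step6, beta_nat c (n + s') (a 0)]
    -- final factorial algebra
    have hsum : ∑ i : Fin (n+1), a i = a 0 + s' := by rw [hs', Fin.sum_univ_succ]
    have hprod : (∏ i : Fin (n+1), ((a i).factorial : ℝ))
        = ((a 0).factorial : ℝ) * ∏ i : Fin n, ((a i.succ).factorial : ℝ) := by
      rw [Fin.prod_univ_succ]
    rw [hK, hsum, hprod]
    have e1 : a 0 + (n + s') + 1 = n + 1 + (a 0 + s') := by ring
    rw [e1]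
    have h2 : ((n + s').factorial : ℝ) ≠ 0 := Nat.cast_ne_zero.mpr (Nat.factorial_ne_zero _)
    have h3 : ((n + 1 + (a 0 + s')).factorial : ℝ) ≠ 0 := Nat.cast_ne_zero.mpr (Nat.factorial_ne_zero _)
    field_simp
lemma mom0 (n : ℕ) : ∫ y in simplexB n 1, (1:ℝ) = 1 / (n.factorial) := by
  have := moment n (fun _ => 0) 1 zero_le_one
  simpa using this

lemma mom1 {n : ℕ} (i : Fin n) : ∫ y in simplexB n 1, y i = 1 / ((n+1).factorial) := by
  have := moment n (fun t => if t = i then 1 else 0) 1 zero_le_one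
  have hint : ∀ y : Fin n → ℝ, (∏ t, (y t) ^ (if t = i then 1 else 0)) = y i := by
    intro y
    rw [show (∏ t, (y t) ^ (if t = i then 1 else 0)) = ∏ t, (if t = i then y t else 1) by
      apply Finset.prod_congr rfl; intro t _; split <;> simp]
    simp
  have hsum : (∑ t : Fin n, (if t = i then 1 else 0)) = 1 := by simp
  have hprod : (∏ t : Fin n, (((if t = i then 1 else 0) : ℕ).factorial : ℝ)) = 1 := by
    apply Finset.prod_eq_one; intro t _; split <;> simp
  rw [hsum, hprod] at this
  simp only [hint] at this
  rw [this]
  simp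

lemma mom2 {n : ℕ} (i : Fin n) : ∫ y in simplexB n 1, (y i) * (y i) = 2 / ((n+2).factorial) := by
  have := moment n (fun t => if t = i then 2 else 0) 1 zero_le_one
  have hint : ∀ y : Fin n → ℝ, (∏ t, (y t) ^ (if t = i then 2 else 0)) = y i * y i := by
    intro y
    rw [show (∏ t, (y t) ^ (if t = i then 2 else 0)) = ∏ t, (if t = i then y t * y t else 1) by
      apply Finset.prod_congr rfl; intro t _; split <;> simp [sq, pow_succ]]
    simp
  have hsum : (∑ t : Fin n, (if t = i then 2 else 0)) = 2 := by simp
  have hprod : (∏ t : Fin n, (((if t = i then 2 else 0) : ℕ).factorial : ℝ)) = 2 := by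
    rw [show (∏ t : Fin n, (((if t = i then 2 else 0) : ℕ).factorial : ℝ))
      = ∏ t : Fin n, (if t = i then 2 else 1) by
        apply Finset.prod_congr rfl; intro t _; split <;> norm_num [Nat.factorial]]
    simp
  rw [hsum, hprod] at this
  simp only [hint] at this
  rw [this]
  simp

lemma mom11 {n : ℕ} {i i' : Fin n} (h : i ≠ i') :
    ∫ y in simplexB n 1, (y i) * (y i') = 1 / ((n+2).factorial) := by
  have := moment n (fun t => (if t = i then 1 else 0) + (if t = i' then 1 else 0)) 1 zero_le_one
  have hint : ∀ y : Fin n → ℝ,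
      (∏ t, (y t) ^ ((if t = i then 1 else 0) + (if t = i' then 1 else 0))) = y i * y i' := by
    intro y
    rw [show (∏ t, (y t) ^ ((if t = i then 1 else 0) + (if t = i' then 1 else 0)))
      = ∏ t, ((if t = i then y t else 1) * (if t = i' then y t else 1)) by
        apply Finset.prod_congr rfl; intro t _
        rw [pow_add]
        congr 1 <;> (split <;> simp)]
    rw [Finset.prod_mul_distrib]
    simp
  have hsum : (∑ t : Fin n, ((if t = i then 1 else 0) + (if t = i' then 1 else 0))) = 2 := by
    rw [Finset.sum_add_distrib]
    simp
  have hprod : (∏ t : Fin n,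
      ((((if t = i then 1 else 0) + (if t = i' then 1 else 0)) : ℕ).factorial : ℝ)) = 1 := by
    apply Finset.prod_eq_one; intro t _
    by_cases h1 : t = i <;> by_cases h2 : t = i' <;> simp_all [Nat.factorial]
  rw [hsum, hprod] at this
  simp only [hint] at this
  rw [this]
  simp
lemma key_haar {ι : Type*} [Fintype ι] (n : ℕ)
    (L : (Fin n → ℝ) →ₗ[ℝ] EuclideanSpace ℝ ι) (hL : Function.Injective L)
    (v : EuclideanSpace ℝ ι) :
    ∃ c : ℝ≥0∞, 0 < c ∧ c ≠ ⊤ ∧ ∀ A : Set (Fin n → ℝ), MeasurableSet A →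
      μH[(n:ℝ)] ((fun y => v + L y) '' A) = c * volume A := by
  classical
  -- the range of L
  set W : Submodule ℝ (EuclideanSpace ℝ ι) := LinearMap.range L with hWdef
  have hW : finrank ℝ W = n := by
    rw [LinearMap.finrank_range_of_inj hL, Module.finrank_fin_fun]
  -- orthonormal basis of W indexed by Fin n
  let bW := (stdOrthonormalBasis ℝ W).reindex (finCongr hW)
  let u : W ≃ₗᵢ[ℝ] EuclideanSpace ℝ (Fin n) := bW.repr
  set L₀ : (Fin n → ℝ) →ₗ[ℝ] W := L.rangeRestrict with hL₀
  set L' : (Fin n → ℝ) →ₗ[ℝ] EuclideanSpace ℝ (Fin n) :=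
    (u.toLinearEquiv.toLinearMap).comp L₀ with hL'
  set L'' : (Fin n → ℝ) →ₗ[ℝ] (Fin n → ℝ) :=
    ((WithLp.linearEquiv 2 ℝ (Fin n → ℝ)).toLinearMap).comp L' with hL''
  have hL''inj : Function.Injective L'' := by
    intro x y h
    apply hL
    have h0 : L₀ x = L₀ y := by
      apply u.injective
      exact (WithLp.linearEquiv 2 ℝ (Fin n → ℝ)).injective h
    exact congrArg Subtype.val h0
  have hL''surj : Function.Surjective L'' := LinearMap.injective_iff_surjective.mp hL''inj
  set eL : (Fin n → ℝ) ≃ₗ[ℝ] (Fin n → ℝ) := LinearEquiv.ofBijective L'' ⟨hL''inj, hL''surj⟩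
  have hdet : LinearMap.det L'' ≠ 0 := (LinearEquiv.isUnit_det' eL).ne_zero
  -- Haar comparison on EuclideanSpace ℝ (Fin n)
  haveI hAH : Measure.IsAddHaarMeasure (μH[(n:ℝ)] : Measure (EuclideanSpace ℝ (Fin n))) := by
    have : ((n:ℝ)) = ((finrank ℝ (EuclideanSpace ℝ (Fin n)) : ℕ) : ℝ) := by
      rw [finrank_euclideanSpace_fin]
    rw [this]
    infer_instance
  have hcomp : (μH[(n:ℝ)] : Measure (EuclideanSpace ℝ (Fin n)))
      = Measure.addHaarScalarFactor (μH[(n:ℝ)]) (volume : Measure (EuclideanSpace ℝ (Fin n)))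
        • (volume : Measure (EuclideanSpace ℝ (Fin n))) :=
    Measure.isAddLeftInvariant_eq_smul _ _
  set csf := Measure.addHaarScalarFactor (μH[(n:ℝ)]) (volume : Measure (EuclideanSpace ℝ (Fin n)))
    with hcsf
  have hcsf_pos : 0 < csf :=
    Measure.addHaarScalarFactor_pos_of_isAddHaarMeasure _ _
  refine ⟨(csf : ℝ≥0∞) * ENNReal.ofReal |LinearMap.det L''|, ?_, ?_, ?_⟩
  · apply ENNReal.mul_pos
    · exact_mod_cast hcsf_pos.ne'
    · exact (ENNReal.ofReal_pos.mpr (abs_pos.mpr hdet)).ne'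
  · exact ENNReal.mul_ne_top ENNReal.coe_ne_top ENNReal.ofReal_ne_top
  · intro A hA
    -- step 1: translation invariance
    have h1 : μH[(n:ℝ)] ((fun y => v + L y) '' A) = μH[(n:ℝ)] (L '' A) := by
      have : (fun y => v + L y) '' A = (fun x => v + x) '' (L '' A) := by
        rw [Set.image_image]
      rw [this]
      exact (IsometryEquiv.addLeft v).isometry.hausdorffMeasure_image
        (Or.inl (by positivity)) _
    -- step 2: isometric embedding into EuclideanSpace ℝ (Fin n)
    have h2 : μH[(n:ℝ)] (L '' A) = μH[(n:ℝ)] (L' '' A) := by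
      have himg : L '' A = (fun z : EuclideanSpace ℝ (Fin n) => (u.symm z : EuclideanSpace ℝ ι)) '' (L' '' A) := by
        rw [Set.image_image]
        apply Set.image_congr
        intro y _
        simp only [hL', LinearMap.comp_apply, LinearEquiv.coe_coe,
          LinearIsometryEquiv.coe_toLinearEquiv, LinearIsometryEquiv.symm_apply_apply]
        rfl
      rw [himg]
      have hiso : Isometry (fun z : EuclideanSpace ℝ (Fin n) => (u.symm z : EuclideanSpace ℝ ι)) := by
        apply Isometry.comp (isometry_subtype_coe) u.symm.isometry
      exact hiso.hausdorffMeasure_image (Or.inl (by positivity)) _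
    -- step 3: Haar comparison + determinant
    have hL'img : L' '' A = (MeasurableEquiv.toLp 2 (Fin n → ℝ)) '' (L'' '' A) := by
      rw [Set.image_image]
      apply Set.image_congr
      intro y _
      rfl
    have hmeas : MeasurableSet (L'' '' A) := by
      have : L'' '' A = eL.symm.toLinearMap ⁻¹' A := by
        ext z
        constructor
        · rintro ⟨x, hx, rfl⟩
          show eL.symm (eL x) ∈ A
          rw [eL.symm_apply_apply]; exact hx
        · intro hz
          exact ⟨eL.symm z, hz, eL.apply_symm_apply z⟩
      rw [this]
      exact (eL.symm.toLinearMap.continuous_of_finiteDimensional).measurable hA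
    have h3 : μH[(n:ℝ)] (L' '' A) = csf * volume (L'' '' A) := by
      rw [hcomp, hL'img]
      simp only [Measure.smul_apply, smul_eq_mul]
      congr 1
      have := (EuclideanSpace.volume_preserving_symm_measurableEquiv_toLp (Fin n)).measure_preimage
        (f := (MeasurableEquiv.toLp 2 (Fin n → ℝ)).symm) hmeas.nullMeasurableSet
      rw [← this]
      congr 1
      rw [← MeasurableEquiv.image_symm]
      rfl
    have h4 : volume (L'' '' A) = ENNReal.ofReal |LinearMap.det L''| * volume A :=
      Measure.addHaar_image_linearMap _ _ _
    rw [h1, h2, h3, h4]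
    ring
lemma uniform_eq {ι : Type*} [Fintype ι] {n : ℕ}
    (S : Set (EuclideanSpace ℝ ι)) (L : (Fin n → ℝ) →ₗ[ℝ] EuclideanSpace ℝ ι)
    (hL : Function.Injective L) (v : EuclideanSpace ℝ ι)
    (ψ : (Fin n → ℝ) → EuclideanSpace ℝ ι) (hψ : ∀ y, ψ y = v + L y)
    (himg : ψ '' simplexB n 1 = S)
    (f : EuclideanSpace ℝ ι → ℝ) (hf : Continuous f) :
    ∫ x, f x ∂(uniformOn (n : ℝ) S)
      = (n.factorial : ℝ) * ∫ y in simplexB n 1, f (ψ y) := by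
  obtain ⟨c, hc0, hcT, hkey⟩ := key_haar n L hL v
  have hkey' : ∀ A : Set (Fin n → ℝ), MeasurableSet A →
      μH[(n:ℝ)] (ψ '' A) = c * volume A := by
    intro A hA
    rw [show ψ '' A = (fun y => v + L y) '' A from Set.image_congr fun y _ => hψ y]
    exact hkey A hA
  have hψcont : Continuous ψ := by
    have : Continuous fun y => v + L y :=
      continuous_const.add L.continuous_of_finiteDimensional
    exact this.congr fun y => (hψ y).symm
  have hψmeas : Measurable ψ := hψcont.measurable
  have hinj : Function.Injective ψ := by
    intro a b h
    rw [hψ a, hψ b] at h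
    exact hL (by rwa [add_right_inj] at h)
  have hBmeas : MeasurableSet (simplexB n 1) := measurableSet_simplexB n 1
  have hfin : volume (simplexB n 1) < ⊤ := (isCompact_simplexB n 1).measure_lt_top
  have hvol_toReal : (volume (simplexB n 1)).toReal = 1 / n.factorial := by
    have h1 : ∫ _y in simplexB n 1, (1:ℝ) = (volume (simplexB n 1)).toReal := by
      rw [setIntegral_const]; simp [Measure.real]
    rw [← h1, mom0 n]
  have hvol0 : volume (simplexB n 1) ≠ 0 := by
    intro h0
    rw [h0] at hvol_toReal
    simp only [ENNReal.toReal_zero] at hvol_toReal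
    have : (0:ℝ) < 1 / n.factorial := by positivity
    linarith [hvol_toReal]
  have hSH : μH[(n:ℝ)] S = c * volume (simplexB n 1) := by
    rw [← himg]; exact hkey' _ hBmeas
  have hmap : uniformOn (n : ℝ) S
      = Measure.map ψ ((volume (simplexB n 1))⁻¹ • volume.restrict (simplexB n 1)) := by
    apply Measure.ext
    intro T hT
    have hTS : T ∩ S = ψ '' (ψ ⁻¹' T ∩ simplexB n 1) := by
      rw [← himg]
      ext t
      constructor
      · rintro ⟨hT', y, hyB, rfl⟩
        exact ⟨y, ⟨hT', hyB⟩, rfl⟩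
      · rintro ⟨y, ⟨hyT, hyB⟩, rfl⟩
        exact ⟨hyT, y, hyB, rfl⟩
    have hLHS : uniformOn (n : ℝ) S T
        = (c * volume (simplexB n 1))⁻¹ * (c * volume (ψ ⁻¹' T ∩ simplexB n 1)) := by
      rw [uniformOn, Measure.smul_apply, Measure.restrict_apply hT, hTS,
        hkey' _ ((hψmeas hT).inter hBmeas), hSH, smul_eq_mul]
    have hRHS : (Measure.map ψ ((volume (simplexB n 1))⁻¹ • volume.restrict (simplexB n 1))) T
        = (volume (simplexB n 1))⁻¹ * volume (ψ ⁻¹' T ∩ simplexB n 1) := by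
      rw [Measure.map_apply hψmeas hT, Measure.smul_apply,
        Measure.restrict_apply (hψmeas hT), smul_eq_mul]
    rw [hLHS, hRHS, ENNReal.mul_inv (Or.inl hc0.ne') (Or.inl hcT),
      mul_mul_mul_comm, ENNReal.inv_mul_cancel hc0.ne' hcT, one_mul]
  rw [hmap, integral_map hψmeas.aemeasurable hf.aestronglyMeasurable, MeasureTheory.integral_smul_measure,
    ENNReal.toReal_inv, hvol_toReal, smul_eq_mul, one_div, inv_inv]

set_option maxHeartbeats 1000000 in
theorem stmt7 (k r : ℕ) (hk : 1 ≤ k) (hr : 1 ≤ r)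
    (μ : Measure (EuclideanSpace ℝ (Fin k × Fin r)))
    (hμ : μ = uniformOn ((k * r : ℕ) - 1 : ℝ)
        {t : EuclideanSpace ℝ (Fin k × Fin r) |
          (∀ p, 0 ≤ t p) ∧ ∑ p : Fin k × Fin r, ((p.1 : ℕ) + 1 : ℝ) * t p = 1})
    (j l : Fin k) (hjl : j ≠ l) :
    (∫ x, (∑ i, x (j, i)) * (∑ i, x (l, i)) ∂μ)
      = (r : ℝ) / (((j : ℕ) + 1 : ℝ) * ((l : ℕ) + 1 : ℝ) * k * ((k : ℝ) * r + 1)) ∧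
    (∫ x, (∑ i, x (j, i)) * (∑ i, x (l, i)) ∂μ)
      ≤ (∫ x, (∑ i, x (j, i)) ∂μ) * (∫ x, (∑ i, x (l, i)) ∂μ) := by
  classical
  have hd : 1 ≤ k * r := Nat.one_le_iff_ne_zero.mpr (by positivity)
  set n : ℕ := k * r - 1 with hn_def
  have hn : n + 1 = k * r := Nat.succ_pred_eq_of_pos hd
  have hw : ∀ p : Fin k × Fin r, (0:ℝ) < ((p.1 : ℕ) + 1 : ℝ) := fun p => by positivity
  set S : Set (EuclideanSpace ℝ (Fin k × Fin r)) :=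
    {t : EuclideanSpace ℝ (Fin k × Fin r) |
      (∀ p, 0 ≤ t p) ∧ ∑ p : Fin k × Fin r, ((p.1 : ℕ) + 1 : ℝ) * t p = 1} with hS_def
  have hexp : ((k * r : ℕ) - 1 : ℝ) = (n : ℝ) := by
    rw [hn_def, Nat.cast_sub hd]; norm_num
  rw [hexp] at hμ
  -- index bookkeeping
  set p₀ : Fin k × Fin r := (⟨0, hk⟩, ⟨0, hr⟩) with hp₀_def
  have hw₀ : ((p₀.1 : ℕ) + 1 : ℝ) = 1 := by simp [hp₀_def]
  have hcard : Fintype.card {p : Fin k × Fin r // p ≠ p₀} = n := by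
    rw [Fintype.card_subtype_compl, Fintype.card_subtype_eq]
    simp [hn_def]
  set e : Fin n ≃ {p : Fin k × Fin r // p ≠ p₀} := (Fintype.equivFinOfCardEq hcard).symm
    with he_def
  -- the affine parametrization
  set coordL : ∀ _p : Fin k × Fin r, (Fin n → ℝ) →ₗ[ℝ] ℝ := fun p =>
    if hp : p = p₀ then -(∑ i : Fin n, LinearMap.proj i)
    else (1 / ((p.1 : ℕ) + 1 : ℝ)) • LinearMap.proj (e.symm ⟨p, hp⟩) with hcoordL_def
  set L : (Fin n → ℝ) →ₗ[ℝ] EuclideanSpace ℝ (Fin k × Fin r) :=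
    (WithLp.linearEquiv 2 ℝ ((Fin k × Fin r) → ℝ)).symm.toLinearMap.comp
      (LinearMap.pi coordL) with hL_def
  set v : EuclideanSpace ℝ (Fin k × Fin r) :=
    (WithLp.equiv 2 ((Fin k × Fin r) → ℝ)).symm
      (fun p => if p = p₀ then 1 else 0) with hv_def
  set ψ : (Fin n → ℝ) → EuclideanSpace ℝ (Fin k × Fin r) := fun y => v + L y with hψ_def
  have heval : ∀ (y : Fin n → ℝ) (p : Fin k × Fin r),
      ψ y p = if hp : p = p₀ then 1 - ∑ i, y i
        else y (e.symm ⟨p, hp⟩) / ((p.1 : ℕ) + 1 : ℝ) := by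
    intro y p
    have h1 : ψ y p = v p + (L y) p := rfl
    have h2 : (L y) p = coordL p y := rfl
    have h3 : v p = if p = p₀ then 1 else 0 := rfl
    rw [h1, h2, h3, hcoordL_def]
    by_cases hp : p = p₀
    · simp only [dif_pos hp, if_pos hp, LinearMap.neg_apply, LinearMap.coe_sum,
        Finset.sum_apply, LinearMap.proj_apply]
      ring
    · simp only [dif_neg hp, if_neg hp, LinearMap.smul_apply, LinearMap.proj_apply,
        smul_eq_mul]
      ring
  have hLinj : Function.Injective L := by
    intro y₁ y₂ hEq
    funext i
    have hp : ((e i : {p : Fin k × Fin r // p ≠ p₀}) : Fin k × Fin r) ≠ p₀ := (e i).2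
    have h1 : ψ y₁ ((e i : {p : Fin k × Fin r // p ≠ p₀}) : Fin k × Fin r)
        = ψ y₂ ((e i : {p : Fin k × Fin r // p ≠ p₀}) : Fin k × Fin r) := by
      rw [hψ_def]; simp only [hEq]
    rw [heval y₁ _, heval y₂ _, dif_neg hp, dif_neg hp] at h1
    have hsub : (⟨((e i : {p : Fin k × Fin r // p ≠ p₀}) : Fin k × Fin r), hp⟩
        : {p : Fin k × Fin r // p ≠ p₀}) = e i := Subtype.coe_eta _ _
    rw [hsub, Equiv.symm_apply_apply] at h1
    have hwne : (((e i : {p : Fin k × Fin r // p ≠ p₀}) : Fin k × Fin r).1.1 : ℝ) + 1 ≠ 0 :=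
      (hw _).ne'
    field_simp at h1
    exact h1
  -- reindexing sums
  have hsum_reindex : ∀ g : (Fin k × Fin r) → ℝ,
      ∑ p : Fin k × Fin r, g p = g p₀ + ∑ i : Fin n, g (e i) := by
    intro g
    rw [← Finset.add_sum_erase _ g (Finset.mem_univ p₀)]
    congr 1
    have h2 : ∑ i : Fin n, g (e i)
        = ∑ q : {p : Fin k × Fin r // p ≠ p₀}, g q :=
      Equiv.sum_comp e (fun q : {p : Fin k × Fin r // p ≠ p₀} => g q)
    have h3 : ∑ x ∈ Finset.univ.erase p₀, g x
        = ∑ q : {p : Fin k × Fin r // p ≠ p₀}, g q :=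
      Finset.sum_subtype _ (fun x => by simp) g
    rw [h3, h2]
  have hcoe_symm : ∀ (p : Fin k × Fin r) (hp : p ≠ p₀),
      ((e (e.symm ⟨p, hp⟩) : {p : Fin k × Fin r // p ≠ p₀}) : Fin k × Fin r) = p := by
    intro p hp
    rw [Equiv.apply_symm_apply]
  -- image of the simplex
  have himg : ψ '' simplexB n 1 = S := by
    apply Set.Subset.antisymm
    · rintro _ ⟨y, hyB, rfl⟩
      refine ⟨fun p => ?_, ?_⟩
      · rw [heval y p]
        split
        · linarith [hyB.2]
        · exact div_nonneg (hyB.1 _) (hw _).le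
      · rw [hsum_reindex (fun p => ((p.1 : ℕ) + 1 : ℝ) * ψ y p)]
        have hterm0 : ((p₀.1 : ℕ) + 1 : ℝ) * ψ y p₀ = 1 - ∑ i, y i := by
          rw [heval, dif_pos rfl, hw₀, one_mul]
        have hterm : ∀ i : Fin n,
            ((((e i : {p : Fin k × Fin r // p ≠ p₀}) : Fin k × Fin r).1 : ℕ) + 1 : ℝ)
              * ψ y ((e i : {p : Fin k × Fin r // p ≠ p₀}) : Fin k × Fin r) = y i := by
          intro i
          rw [heval, dif_neg (e i).2, Subtype.coe_eta, Equiv.symm_apply_apply]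
          field_simp
        rw [hterm0, Finset.sum_congr rfl (fun i _ => hterm i)]
        ring
    · intro t ht
      refine ⟨fun i => ((((e i : {p : Fin k × Fin r // p ≠ p₀}) : Fin k × Fin r).1 : ℕ) + 1 : ℝ)
        * t ((e i : {p : Fin k × Fin r // p ≠ p₀}) : Fin k × Fin r), ⟨fun i => ?_, ?_⟩, ?_⟩
      · exact mul_nonneg (hw _).le (ht.1 _)
      · have := ht.2
        rw [hsum_reindex (fun p => ((p.1 : ℕ) + 1 : ℝ) * t p)] at this
        have h0 : 0 ≤ ((p₀.1 : ℕ) + 1 : ℝ) * t p₀ := mul_nonneg (hw _).le (ht.1 _)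
        linarith
      · ext p
        rw [heval]
        by_cases hp : p = p₀
        · rw [dif_pos hp]
          have := ht.2
          rw [hsum_reindex (fun p => ((p.1 : ℕ) + 1 : ℝ) * t p)] at this
          rw [hp]
          rw [hw₀, one_mul] at this
          linarith
        · rw [dif_neg hp]
          have hsubeq : ∀ i : Fin n, e.symm ⟨p, hp⟩ = i →
              ((((e i : {p : Fin k × Fin r // p ≠ p₀}) : Fin k × Fin r).1 : ℕ) + 1 : ℝ)
                * t ((e i : {p : Fin k × Fin r // p ≠ p₀}) : Fin k × Fin r)
                = (((p.1 : ℕ) + 1 : ℝ)) * t p := by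
            intro i hi
            rw [← hi, hcoe_symm p hp]
          rw [hsubeq (e.symm ⟨p, hp⟩) rfl]
          field_simp
  -- measurability of S
  have hcont_eval : ∀ p : Fin k × Fin r,
      Continuous fun x : EuclideanSpace ℝ (Fin k × Fin r) => x p := by
    intro p
    exact (EuclideanSpace.proj (𝕜 := ℝ) (ι := Fin k × Fin r) p).continuous
  -- the master integration formula
  have hEXP : ∀ f : EuclideanSpace ℝ (Fin k × Fin r) → ℝ, Continuous f →
      ∫ x, f x ∂μ = (n.factorial : ℝ) * ∫ y in simplexB n 1, f (ψ y) := by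
    intro f hf
    rw [hμ]
    exact uniform_eq S L hLinj v ψ (fun y => rfl) himg f hf
  -- continuity on the parameter side
  have hψcont : Continuous ψ :=
    continuous_const.add L.continuous_of_finiteDimensional
  have hψcc : ∀ p, Continuous fun y : Fin n → ℝ => ψ y p := fun p =>
    (hcont_eval p).comp hψcont
  have hInt1 : ∀ p, IntegrableOn (fun y => ψ y p) (simplexB n 1) volume :=
    fun p => integrableOn_simplexB (hψcc p)
  have hInt2 : ∀ p q, IntegrableOn (fun y => ψ y p * ψ y q) (simplexB n 1) volume :=
    fun p q => integrableOn_simplexB ((hψcc p).mul (hψcc q))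
  have hfact1 : ((n+1).factorial : ℝ) = ((n:ℝ)+1) * n.factorial := by
    rw [Nat.factorial_succ]; push_cast; ring
  have hfact2 : ((n+2).factorial : ℝ) = ((n:ℝ)+2) * ((n:ℝ)+1) * n.factorial := by
    rw [show n+2 = (n+1)+1 from rfl, Nat.factorial_succ, Nat.factorial_succ]; push_cast; ring
  have hfn : (n.factorial : ℝ) ≠ 0 := Nat.cast_ne_zero.mpr n.factorial_ne_zero
  have hsingleB : ∀ p : Fin k × Fin r,
      ∫ y in simplexB n 1, ψ y p = 1 / (((p.1 : ℕ) + 1 : ℝ) * (n+1).factorial) := by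
    intro p
    by_cases hp : p = p₀
    · rw [hp, hw₀, one_mul]
      rw [show (fun y : Fin n → ℝ => ψ y p₀) = fun y => 1 - ∑ i, y i from
        funext fun y => by rw [heval, dif_pos rfl]]
      rw [integral_sub (integrableOn_simplexB continuous_const)
        (integrableOn_simplexB (continuous_finset_sum _ fun i _ => continuous_apply i))]
      rw [mom0 n, integral_finset_sum _
        (fun i _ => integrableOn_simplexB (continuous_apply i))]
      rw [Finset.sum_congr rfl (fun i _ => mom1 i)]
      rw [Finset.sum_const, Finset.card_univ, Fintype.card_fin, nsmul_eq_mul]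
      rw [hfact1]
      field_simp
      ring
    · rw [show (fun y : Fin n → ℝ => ψ y p)
          = fun y => y (e.symm ⟨p, hp⟩) * (1 / ((p.1 : ℕ) + 1 : ℝ)) from
        funext fun y => by rw [heval, dif_neg hp]; ring]
      rw [MeasureTheory.integral_mul_const, mom1]
      field_simp
  have hmix : ∀ a : Fin n, ∫ y in simplexB n 1, y a * (1 - ∑ i, y i)
      = 1 / ((n+2).factorial : ℝ) := by
    intro a
    have hnpos : 0 < n := a.pos
    rw [show (fun y : Fin n → ℝ => y a * (1 - ∑ i, y i))
        = fun y => y a - ∑ i, y a * y i from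
      funext fun y => by rw [mul_sub, mul_one, Finset.mul_sum]]
    rw [integral_sub (integrableOn_simplexB (continuous_apply a))
      (integrableOn_simplexB (f := fun y : Fin n → ℝ => ∑ i, y a * y i) (continuous_finset_sum _
        fun i _ => (continuous_apply a).mul (continuous_apply i)))]
    rw [mom1 a, integral_finset_sum _
      (fun i _ => integrableOn_simplexB (f := fun y : Fin n → ℝ => y a * y i) ((continuous_apply a).mul (continuous_apply i)))]
    have hsplit : ∑ i : Fin n, ∫ y in simplexB n 1, y a * y i
        = 2/((n+2).factorial) + ((n:ℝ) - 1) * (1/((n+2).factorial)) := by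
      rw [← Finset.add_sum_erase _ _ (Finset.mem_univ a), mom2 a]
      congr 1
      rw [Finset.sum_congr rfl (fun i hi => mom11 (Ne.symm (Finset.mem_erase.mp hi).1))]
      rw [Finset.sum_const, Finset.card_erase_of_mem (Finset.mem_univ a),
        Finset.card_univ, Fintype.card_fin, nsmul_eq_mul]
      congr 1
      rw [Nat.cast_sub hnpos]
      simp
    rw [hsplit, hfact1, hfact2]
    field_simp
    ring
  have hpairB : ∀ p q : Fin k × Fin r, p ≠ q → ∫ y in simplexB n 1, ψ y p * ψ y q
      = 1 / (((p.1 : ℕ) + 1 : ℝ) * ((q.1 : ℕ) + 1 : ℝ) * (n+2).factorial) := by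
    have hmain : ∀ p q : Fin k × Fin r, p ≠ p₀ → q = p₀ →
        ∫ y in simplexB n 1, ψ y p * ψ y q
          = 1 / (((p.1 : ℕ) + 1 : ℝ) * ((q.1 : ℕ) + 1 : ℝ) * (n+2).factorial) := by
      intro p q hp hq
      subst hq
      rw [hw₀, mul_one]
      rw [show (fun y : Fin n → ℝ => ψ y p * ψ y p₀)
          = fun y => (y (e.symm ⟨p, hp⟩) * (1 - ∑ i, y i)) * (1 / ((p.1 : ℕ) + 1 : ℝ)) from
        funext fun y => by rw [heval, heval, dif_neg hp, dif_pos rfl]; ring]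
      rw [MeasureTheory.integral_mul_const, hmix]
      field_simp
    intro p q hpq
    by_cases hp : p = p₀
    · have hq : q ≠ p₀ := fun h => hpq (hp.trans h.symm)
      have := hmain q p hq hp
      rw [show (fun y : Fin n → ℝ => ψ y p * ψ y q) = fun y => ψ y q * ψ y p from
        funext fun y => mul_comm _ _]
      rw [this]
      ring_nf
    · by_cases hq : q = p₀
      · exact hmain p q hp hq
      · have hab : e.symm ⟨p, hp⟩ ≠ e.symm ⟨q, hq⟩ := by
          intro h
          apply hpq
          have h2 := congrArg
            (fun z : Fin n => ((e z : {p : Fin k × Fin r // p ≠ p₀}) : Fin k × Fin r)) h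
          simpa [Equiv.apply_symm_apply] using h2
        rw [show (fun y : Fin n → ℝ => ψ y p * ψ y q)
            = fun y => (y (e.symm ⟨p, hp⟩) * y (e.symm ⟨q, hq⟩))
              * (1 / (((p.1 : ℕ) + 1 : ℝ) * ((q.1 : ℕ) + 1 : ℝ))) from
          funext fun y => by rw [heval, heval, dif_neg hp, dif_neg hq, div_mul_div_comm, mul_one_div]]
        rw [MeasureTheory.integral_mul_const, mom11 hab]
        field_simp
  -- casts and positivity
  have hkr1 : ((n:ℝ) + 1) = (k:ℝ) * r := by exact_mod_cast hn
  have hkpos : (0:ℝ) < k := by exact_mod_cast hk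
  have hrpos : (0:ℝ) < r := by exact_mod_cast hr
  have hj1 : (0:ℝ) < ((j : ℕ) + 1 : ℝ) := by positivity
  have hl1 : (0:ℝ) < ((l : ℕ) + 1 : ℝ) := by positivity
  have hkr1pos : (0:ℝ) < (k:ℝ) * r + 1 := by positivity
  -- the two integrals
  have hI2 : (∫ x, (∑ i, x (j, i)) * (∑ i, x (l, i)) ∂μ)
      = (r : ℝ) / (((j : ℕ) + 1 : ℝ) * ((l : ℕ) + 1 : ℝ) * k * ((k : ℝ) * r + 1)) := by
    rw [hEXP (fun x => (∑ i, x (j, i)) * (∑ i, x (l, i)))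
      ((continuous_finset_sum _ fun i _ => hcont_eval (j, i)).mul
        (continuous_finset_sum _ fun i _ => hcont_eval (l, i)))]
    have hexpand : (fun y => (∑ i, ψ y (j, i)) * (∑ i, ψ y (l, i)))
        = fun y => ∑ i : Fin r, ∑ i' : Fin r, ψ y (j, i) * ψ y (l, i') :=
      funext fun y => by rw [Finset.sum_mul_sum]
    rw [hexpand]
    have h1 : ∫ y in simplexB n 1, ∑ i : Fin r, ∑ i' : Fin r, ψ y (j, i) * ψ y (l, i')
        = ∑ i : Fin r, ∑ i' : Fin r, ∫ y in simplexB n 1, ψ y (j, i) * ψ y (l, i') := by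
      rw [integral_finset_sum _ (fun i _ => integrableOn_simplexB (f := fun y => ∑ i' : Fin r, ψ y (j, i) * ψ y (l, i'))
        (continuous_finset_sum _ (fun i' _ => (hψcc _).mul (hψcc _))))]
      exact Finset.sum_congr rfl fun i _ => integral_finset_sum _ (fun i' (_ : i' ∈ Finset.univ) => hInt2 (j, i) (l, i'))
    rw [h1]
    have hne : ∀ i i' : Fin r, ((j, i) : Fin k × Fin r) ≠ (l, i') := by
      intro i i' h
      exact hjl (congrArg Prod.fst h)
    rw [Finset.sum_congr rfl (fun i (_ : i ∈ Finset.univ) => Finset.sum_congr rfl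
      (fun i' (_ : i' ∈ Finset.univ) => hpairB (j, i) (l, i') (hne i i')))]
    simp only [Finset.sum_const, Finset.card_univ, Fintype.card_fin, nsmul_eq_mul]
    rw [hfact2, show ((n:ℝ)+2) = (k:ℝ)*r + 1 from by linarith, hkr1]
    field_simp
  have hI1 : ∀ j' : Fin k, (∫ x, (∑ i, x (j', i)) ∂μ) = 1/(((j' : ℕ) + 1 : ℝ) * k) := by
    intro j'
    rw [hEXP (fun x => (∑ i, x (j', i)))
      (continuous_finset_sum _ fun i _ => hcont_eval (j', i))]
    rw [integral_finset_sum _ (fun i (_ : i ∈ Finset.univ) => hInt1 (j', i))]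
    rw [Finset.sum_congr rfl fun i _ => hsingleB (j', i)]
    simp only [Finset.sum_const, Finset.card_univ, Fintype.card_fin, nsmul_eq_mul]
    rw [hfact1, hkr1]
    have hj'1 : (0:ℝ) < ((j' : ℕ) + 1 : ℝ) := by positivity
    field_simp
  refine ⟨hI2, ?_⟩
  rw [hI2, hI1 j, hI1 l]
  rw [div_mul_div_comm, one_mul]
  have hA : (0:ℝ) < ((j : ℕ) + 1 : ℝ) * ((l : ℕ) + 1 : ℝ) * k * ((k : ℝ) * r + 1) := by
    positivity
  have hB : (0:ℝ) < (((j : ℕ) + 1 : ℝ) * k) * (((l : ℕ) + 1 : ℝ) * k) := by positivity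
  rw [div_le_div_iff₀ hA hB]
  have key : (0:ℝ) ≤ ((j : ℕ) + 1 : ℝ) * ((l : ℕ) + 1 : ℝ) * k :=
    le_of_lt (by positivity)
  nlinarith [mul_pos (mul_pos hj1 hl1) hkpos, mul_pos hkpos hrpos]
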